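/- Let X be a complex Banach space, let G be a compact topological group acting separately continuously on X by continuous linear operators via a homomorphism ρ, and let K ⊆ X be a G-invariant set. Suppose z ∈ X \ K and Q is a continuous polynomial on X such that sup_{w∈K}|Q(w)| < |Q(z)|, |Q(z)| > 1, and for some η ∈ (0,1) the set of arguments { Arg(Q(ρ(γ)z)) : γ ∈ G, |Q(ρ(γ)z)| ≥ η } is finite. Then there exists a G-invariant continuous polynomial P on X that separates z from K, i.e. sup_{w∈K}|P(w)| < |P(z)|. Furthermore, if Q is homogeneous, then P can be chosen to be homogeneous. -/

import Mathlib

/-- A continuous polynomial on a normed space `X` over `𝕜`: a function of the form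
`P x = a₀ + ∑_{k=1}^{N} A_k (x, …, x)` where each `A_k` is a continuous `k`-linear map. -/
def IsContinuousPolynomial (𝕜 : Type*) [NontriviallyNormedField 𝕜] {X : Type*}
    [NormedAddCommGroup X] [NormedSpace 𝕜 X] (P : X → 𝕜) : Prop :=
  ∃ (N : ℕ) (a₀ : 𝕜)
    (A : (k : Fin N) → ContinuousMultilinearMap 𝕜 (fun _ : Fin (k.1 + 1) => X) 𝕜),
    ∀ x, P x = a₀ + ∑ k, A k (fun _ => x)

/-- An `m`-homogeneous continuous polynomial: `P x = A (x, …, x)` for a single continuous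
`m`-linear map `A`. -/
def IsHomogeneousPolynomial (𝕜 : Type*) [NontriviallyNormedField 𝕜] {X : Type*}
    [NormedAddCommGroup X] [NormedSpace 𝕜 X] (m : ℕ) (P : X → 𝕜) : Prop :=
  ∃ A : ContinuousMultilinearMap 𝕜 (fun _ : Fin m => X) 𝕜, ∀ x, P x = A (fun _ => x)

open MeasureTheory

section Aux

variable {X : Type*} [NormedAddCommGroup X] [NormedSpace ℂ X]

/-- Product of continuous multilinear maps, as a continuous multilinear map. -/
noncomputable def mulCMM {m l : ℕ} (A : ContinuousMultilinearMap ℂ (fun _ : Fin m => X) ℂ)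
    (B : ContinuousMultilinearMap ℂ (fun _ : Fin l => X) ℂ) :
    ContinuousMultilinearMap ℂ (fun _ : Fin (m + l) => X) ℂ :=
  MultilinearMap.mkContinuous
    (((LinearMap.mul' ℂ ℂ).compMultilinearMap
      (A.toMultilinearMap.domCoprod B.toMultilinearMap)).domDomCongr finSumFinEquiv)
    (‖A‖ * ‖B‖) (by
      intro x
      simp only [MultilinearMap.domDomCongr_apply, LinearMap.compMultilinearMap_apply,
        MultilinearMap.domCoprod_apply, LinearMap.mul'_apply]
      rw [← Equiv.prod_comp finSumFinEquiv (fun i => ‖x i‖), Fintype.prod_sum_type]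
      calc ‖(A fun i => x (finSumFinEquiv (Sum.inl i))) * (B fun i => x (finSumFinEquiv (Sum.inr i)))‖
          = ‖A fun i => x (finSumFinEquiv (Sum.inl i))‖ * ‖B fun i => x (finSumFinEquiv (Sum.inr i))‖ := norm_mul _ _
        _ ≤ (‖A‖ * ∏ i : Fin m, ‖x (finSumFinEquiv (Sum.inl i))‖) *
            (‖B‖ * ∏ i : Fin l, ‖x (finSumFinEquiv (Sum.inr i))‖) := by
            apply mul_le_mul (A.le_opNorm _) (B.le_opNorm _) (norm_nonneg _)
            positivity
        _ = ‖A‖ * ‖B‖ * ((∏ i : Fin m, ‖x (finSumFinEquiv (Sum.inl i))‖) * ∏ i : Fin l, ‖x (finSumFinEquiv (Sum.inr i))‖) := by ring)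

theorem mulCMM_apply {m l : ℕ} (A : ContinuousMultilinearMap ℂ (fun _ : Fin m => X) ℂ)
    (B : ContinuousMultilinearMap ℂ (fun _ : Fin l => X) ℂ) (x : X) :
    mulCMM A B (fun _ => x) = A (fun _ => x) * B (fun _ => x) := rfl

theorem IsHomog.mul {m l : ℕ} {P Q : X → ℂ} (hP : IsHomogeneousPolynomial ℂ m P)
    (hQ : IsHomogeneousPolynomial ℂ l Q) :
    IsHomogeneousPolynomial ℂ (m + l) (fun x => P x * Q x) := by
  obtain ⟨A, hA⟩ := hP; obtain ⟨B, hB⟩ := hQ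
  exact ⟨mulCMM A B, fun x => by show P x * Q x = _; rw [mulCMM_apply, hA, hB]⟩

theorem IsHomog.const (c : ℂ) : IsHomogeneousPolynomial ℂ 0 (fun _ : X => c) :=
  ⟨ContinuousMultilinearMap.constOfIsEmpty ℂ _ c, fun _ => rfl⟩

theorem IsHomog.sum {k : ℕ} {ι : Type*} (s : Finset ι) (F : ι → X → ℂ)
    (h : ∀ i ∈ s, IsHomogeneousPolynomial ℂ k (F i)) :
    IsHomogeneousPolynomial ℂ k (fun x => ∑ i ∈ s, F i x) := by
  classical
  choose A hA using h
  refine ⟨∑ i ∈ s.attach, A i i.2, fun x => ?_⟩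
  show (∑ i ∈ s, F i x) = _
  rw [ContinuousMultilinearMap.sum_apply, ← Finset.sum_attach s (fun i => F i x)]
  exact Finset.sum_congr rfl fun i _ => hA i i.2 x

theorem isHomog_continuous {k : ℕ} {P : X → ℂ} (h : IsHomogeneousPolynomial ℂ k P) :
    Continuous P := by
  obtain ⟨A, hA⟩ := h
  have : Continuous fun x : X => A (fun _ => x) := A.cont.comp (continuous_pi fun _ => continuous_id)
  simpa [← funext hA] using this

/-- An auxiliary representation: a sum of homogeneous continuous polynomials. -/
def SumHomog (P : X → ℂ) : Prop :=
  ∃ (N : ℕ) (d : Fin N → ℕ) (F : Fin N → X → ℂ),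
    (∀ i, IsHomogeneousPolynomial ℂ (d i) (F i)) ∧ ∀ x, P x = ∑ i, F i x

theorem sumHomog_of_poly {P : X → ℂ} (h : IsContinuousPolynomial ℂ P) : SumHomog P := by
  obtain ⟨N, a₀, A, hA⟩ := h
  refine ⟨N + 1, Fin.cases 0 (fun k => k.1 + 1),
    Fin.cases (fun _ => a₀) (fun k x => A k (fun _ => x)), ?_, ?_⟩
  · refine Fin.cases ?_ ?_
    · exact IsHomog.const a₀
    · intro k; exact ⟨A k, fun x => rfl⟩
  · intro x
    rw [hA x, Fin.sum_univ_succ]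
    rfl

theorem poly_of_sumHomog {P : X → ℂ} (h : SumHomog P) : IsContinuousPolynomial ℂ P := by
  classical
  obtain ⟨N, d, F, hF, hP⟩ := h
  set M := (Finset.univ.sup d) + 1 with hM
  have hd : ∀ i : Fin N, d i < M := fun i =>
    Nat.lt_succ_of_le (Finset.le_sup (Finset.mem_univ i))
  set H : ℕ → X → ℂ := fun k x => ∑ i ∈ Finset.univ.filter (fun i => d i = k), F i x with hH
  have hHhom : ∀ k, IsHomogeneousPolynomial ℂ k (H k) := by
    intro k
    exact IsHomog.sum _ _ (fun i hi => by
      rw [Finset.mem_filter] at hi; exact hi.2 ▸ hF i)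
  have key : ∀ x, P x = ∑ k ∈ Finset.range M, H k x := by
    intro x
    rw [hP x, ← Finset.sum_fiberwise_of_maps_to (g := d)
      (fun i _ => Finset.mem_range.mpr (hd i)) (fun i => F i x)]
  obtain ⟨M', hM'⟩ : ∃ M', M = M' + 1 := ⟨Finset.univ.sup d, rfl⟩
  obtain ⟨A0, hA0⟩ := hHhom 0
  choose A hA using fun k => hHhom (k + 1)
  refine ⟨M', A0 (fun _ => 0), fun k => A k.1, fun x => ?_⟩
  have h0 : H 0 x = A0 (fun _ => 0) := by
    rw [hA0 x]
    congr 1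
    exact funext fun i => i.elim0
  rw [key x, hM', Finset.sum_range_succ']
  rw [add_comm, h0]
  congr 1
  rw [← Fin.sum_univ_eq_sum_range (fun i => H (i + 1) x) M']
  exact Finset.sum_congr rfl fun k _ => hA k.1 x

theorem sumHomog_continuous {P : X → ℂ} (h : SumHomog P) : Continuous P := by
  obtain ⟨N, d, F, hF, hP⟩ := h
  have : Continuous fun x => ∑ i, F i x :=
    continuous_finset_sum _ (fun i _ => isHomog_continuous (hF i))
  simpa [← funext hP] using this

theorem SumHomog.mul {P Q : X → ℂ} (hP : SumHomog P) (hQ : SumHomog Q) :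
    SumHomog (fun x => P x * Q x) := by
  obtain ⟨N, d, F, hF, hP⟩ := hP
  obtain ⟨M, e, G, hG, hQ⟩ := hQ
  refine ⟨N * M, fun k => d (finProdFinEquiv.symm k).1 + e (finProdFinEquiv.symm k).2,
    fun k x => F (finProdFinEquiv.symm k).1 x * G (finProdFinEquiv.symm k).2 x,
    fun k => IsHomog.mul (hF _) (hG _), fun x => ?_⟩
  show P x * Q x = _
  rw [hP x, hQ x, Finset.sum_mul_sum]
  exact (Fintype.sum_prod_type _).symm.trans
    (Equiv.sum_comp finProdFinEquiv.symm (fun p : Fin N × Fin M => F p.1 x * G p.2 x)).symm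

theorem SumHomog.pow {Q : X → ℂ} (hQ : SumHomog Q) (n : ℕ) :
    SumHomog (fun x => Q x ^ n) := by
  induction n with
  | zero => exact ⟨1, fun _ => 0, fun _ _ => 1, fun _ => by simpa using IsHomog.const 1,
      fun x => by simp⟩
  | succ n ih =>
    have := SumHomog.mul ih hQ
    simpa [pow_succ] using this

theorem IsHomog.pow {Q : X → ℂ} {m : ℕ} (hQ : IsHomogeneousPolynomial ℂ m Q) (n : ℕ) :
    IsHomogeneousPolynomial ℂ (m * n) (fun x => Q x ^ n) := by
  induction n with
  | zero => simpa using IsHomog.const (X := X) 1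
  | succ n ih =>
    have := IsHomog.mul ih hQ
    rw [mul_add, mul_one] at *
    simpa [pow_succ] using this

/-- On a compact space, a continuous function is integrable for a finite Borel measure. -/
theorem cont_integrable {G : Type*} [TopologicalSpace G] [CompactSpace G]
    [MeasurableSpace G] [OpensMeasurableSpace G] {μ : Measure G} [IsFiniteMeasure μ]
    {E : Type*} [NormedAddCommGroup E] [SecondCountableTopology E] {f : G → E}
    (hf : Continuous f) : Integrable f μ := by
  rcases isEmpty_or_nonempty G with h | h
  · simp [Integrable, HasFiniteIntegral, μ.eq_zero_of_isEmpty]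
  obtain ⟨γ₀, -, hγ₀⟩ := isCompact_univ.exists_isMaxOn Set.univ_nonempty hf.norm.continuousOn
  exact ⟨hf.stronglyMeasurable.aestronglyMeasurable,
    HasFiniteIntegral.of_bounded (ae_of_all μ fun γ => hγ₀ (Set.mem_univ γ))⟩

end Aux

section Group

variable {X : Type*} [NormedAddCommGroup X] [NormedSpace ℂ X]
variable {G : Type*} [Group G] [TopologicalSpace G] [IsTopologicalGroup G] [CompactSpace G]
  [MeasurableSpace G] [BorelSpace G]

set_option linter.unusedSectionVars false

/-- Uniform bound on a compact family of operators (Banach–Steinhaus). -/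
theorem op_bound [CompleteSpace X] (ρ : G →* (X ≃L[ℂ] X))
    (hρ : ∀ x : X, Continuous fun g : G => (ρ g) x) :
    ∃ M : ℝ, 0 ≤ M ∧ ∀ γ : G, ‖((ρ γ : X ≃L[ℂ] X) : X →L[ℂ] X)‖ ≤ M := by
  have h : ∀ x : X, ∃ C, ∀ γ : G, ‖((ρ γ : X ≃L[ℂ] X) : X →L[ℂ] X) x‖ ≤ C := by
    intro x
    obtain ⟨γ₀, -, hγ₀⟩ := isCompact_univ.exists_isMaxOn Set.univ_nonempty (hρ x).norm.continuousOn
    exact ⟨‖(ρ γ₀) x‖, fun γ => hγ₀ (Set.mem_univ γ)⟩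
  obtain ⟨C, hC⟩ := banach_steinhaus h
  exact ⟨max C 0, le_max_right _ _, fun γ => (hC γ).trans (le_max_left _ _)⟩

theorem avg_homog (μ : Measure G) [IsProbabilityMeasure μ]
    (ρ : G →* (X ≃L[ℂ] X)) (hρ : ∀ x : X, Continuous fun g : G => (ρ g) x)
    {M : ℝ} (hM0 : 0 ≤ M) (hM : ∀ γ : G, ‖((ρ γ : X ≃L[ℂ] X) : X →L[ℂ] X)‖ ≤ M)
    {m : ℕ} {F : X → ℂ} (hF : IsHomogeneousPolynomial ℂ m F) :
    IsHomogeneousPolynomial ℂ m (fun x => ∫ γ, F ((ρ γ⁻¹) x) ∂μ) := by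
  obtain ⟨A, hA⟩ := hF
  have hcont : ∀ x : Fin m → X, Continuous fun γ : G => A (fun j => (ρ γ⁻¹) (x j)) :=
    fun x => A.cont.comp (continuous_pi fun j => (hρ (x j)).comp continuous_inv)
  have hint : ∀ x : Fin m → X, Integrable (fun γ : G => A (fun j => (ρ γ⁻¹) (x j))) μ :=
    fun x => cont_integrable (hcont x)
  set Abar : MultilinearMap ℂ (fun _ : Fin m => X) ℂ :=
    { toFun := fun x => ∫ γ, A (fun j => (ρ γ⁻¹) (x j)) ∂μ
      map_update_add' := by
        intro _ x i a b
        have key : ∀ γ : G,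
            (A fun j => (ρ γ⁻¹) (Function.update x i (a + b) j)) =
            (A fun j => (ρ γ⁻¹) (Function.update x i a j)) +
            (A fun j => (ρ γ⁻¹) (Function.update x i b j)) := by
          intro γ
          have h1 : ∀ c : X, (fun j => (ρ γ⁻¹) (Function.update x i c j)) =
              Function.update (fun j => (ρ γ⁻¹) (x j)) i ((ρ γ⁻¹) c) := by
            intro c
            ext j
            rcases eq_or_ne j i with rfl | hj
            · simp
            · simp [Function.update_of_ne hj]
          rw [h1, h1, h1, map_add, A.map_update_add]
        simp only [key]
        exact integral_add (hint _) (hint _)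
      map_update_smul' := by
        intro _ x i c a
        have key : ∀ γ : G,
            (A fun j => (ρ γ⁻¹) (Function.update x i (c • a) j)) =
            c • (A fun j => (ρ γ⁻¹) (Function.update x i a j)) := by
          intro γ
          have h1 : ∀ c : X, (fun j => (ρ γ⁻¹) (Function.update x i c j)) =
              Function.update (fun j => (ρ γ⁻¹) (x j)) i ((ρ γ⁻¹) c) := by
            intro c
            ext j
            rcases eq_or_ne j i with rfl | hj
            · simp
            · simp [Function.update_of_ne hj]
          rw [h1, h1, _root_.map_smul, A.map_update_smul]
        simp only [key]
        exact integral_smul c _ }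
  refine ⟨Abar.mkContinuous (‖A‖ * M ^ m) ?_, fun x => ?_⟩
  · intro x
    show ‖∫ γ, A (fun j => (ρ γ⁻¹) (x j)) ∂μ‖ ≤ _
    calc ‖∫ γ, A (fun j => (ρ γ⁻¹) (x j)) ∂μ‖
        ≤ ∫ γ, ‖A (fun j => (ρ γ⁻¹) (x j))‖ ∂μ := norm_integral_le_integral_norm _
      _ ≤ ∫ _γ, ‖A‖ * M ^ m * ∏ j, ‖x j‖ ∂μ := by
          refine integral_mono (cont_integrable (hcont x).norm) (integrable_const _) ?_
          intro γ
          calc ‖A (fun j => (ρ γ⁻¹) (x j))‖ ≤ ‖A‖ * ∏ j, ‖(ρ γ⁻¹) (x j)‖ := A.le_opNorm _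
            _ ≤ ‖A‖ * ∏ j, M * ‖x j‖ := by
                refine mul_le_mul_of_nonneg_left (Finset.prod_le_prod (fun j _ => norm_nonneg _)
                  (fun j _ => ?_)) (norm_nonneg A)
                exact ((ρ γ⁻¹ : X ≃L[ℂ] X) : X →L[ℂ] X).le_of_opNorm_le (hM γ⁻¹) (x j)
            _ = ‖A‖ * M ^ m * ∏ j, ‖x j‖ := by
                rw [Finset.prod_mul_distrib, Finset.prod_const]
                simp [mul_assoc]
      _ = ‖A‖ * M ^ m * ∏ j, ‖x j‖ := by
          rw [integral_const]
          simp
  · show (∫ γ, F ((ρ γ⁻¹) x) ∂μ) = ∫ γ, A (fun _ => (ρ γ⁻¹) x) ∂μ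
    exact integral_congr_ae (ae_of_all μ fun γ => hA _)

theorem avg_sumHomog (μ : Measure G) [IsProbabilityMeasure μ]
    (ρ : G →* (X ≃L[ℂ] X)) (hρ : ∀ x : X, Continuous fun g : G => (ρ g) x)
    {M : ℝ} (hM0 : 0 ≤ M) (hM : ∀ γ : G, ‖((ρ γ : X ≃L[ℂ] X) : X →L[ℂ] X)‖ ≤ M)
    {F : X → ℂ} (hF : SumHomog F) :
    SumHomog (fun x => ∫ γ, F ((ρ γ⁻¹) x) ∂μ) := by
  obtain ⟨N, d, Fi, hFi, hFeq⟩ := hF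
  refine ⟨N, d, fun i x => ∫ γ, Fi i ((ρ γ⁻¹) x) ∂μ,
    fun i => avg_homog μ ρ hρ hM0 hM (hFi i), fun x => ?_⟩
  show (∫ γ, F ((ρ γ⁻¹) x) ∂μ) = _
  rw [integral_congr_ae (ae_of_all μ fun γ => hFeq ((ρ γ⁻¹) x))]
  exact integral_finset_sum _ (fun i _ => cont_integrable
    ((isHomog_continuous (hFi i)).comp ((hρ x).comp continuous_inv)))

end Group

section Approx

open Real

theorem simul_approx (s : Finset ℝ) (L : ℕ) (hL : 0 < L) :
    ∃ q : ℕ, 1 ≤ q ∧ ∀ θ ∈ s, ∃ m : ℤ, |q * θ - m| < 1 / L := by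
  classical
  set bin : ℝ → Fin L := fun r => ⟨⌊Int.fract r * L⌋₊, by
    have h0 : 0 ≤ Int.fract r := Int.fract_nonneg r
    have h1 : Int.fract r < 1 := Int.fract_lt_one r
    have : Int.fract r * L < L := by
      nlinarith [(Nat.cast_pos (α := ℝ)).mpr hL]
    exact Nat.floor_lt (by positivity) |>.mpr this⟩ with hbin
  set Φ : ℕ → (s → Fin L) := fun n θ => bin (n * θ.1) with hΦ
  have hcard : Fintype.card (s → Fin L) < (Finset.range (L ^ s.card + 1)).card := by
    rw [Finset.card_range]
    rw [Fintype.card_fun]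
    simp [Fintype.card_coe]
  obtain ⟨n₁, -, n₂, -, hne, heq⟩ :=
    Finset.exists_ne_map_eq_of_card_lt_of_maps_to hcard
      (fun n _ => Finset.mem_univ (Φ n))
  wlog hlt : n₁ < n₂ generalizing n₁ n₂
  · exact this n₂ n₁ hne.symm heq.symm (by omega)
  refine ⟨n₂ - n₁, by omega, fun θ hθ => ?_⟩
  have hkey := congrFun heq ⟨θ, hθ⟩
  simp only [hΦ, hbin, Fin.mk.injEq] at hkey
  have hfr : |Int.fract (n₂ * θ) - Int.fract (n₁ * θ)| < 1 / L := by
    set a := Int.fract (n₂ * θ) * L with ha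
    set b := Int.fract (n₁ * θ) * L with hb
    have hLpos : (0:ℝ) < L := Nat.cast_pos.mpr hL
    have ha0 : 0 ≤ a := mul_nonneg (Int.fract_nonneg _) hLpos.le
    have hb0 : 0 ≤ b := mul_nonneg (Int.fract_nonneg _) hLpos.le
    have h1 : a < ⌊a⌋₊ + 1 := Nat.lt_floor_add_one a
    have h2 : b < ⌊b⌋₊ + 1 := Nat.lt_floor_add_one b
    have h3 : (⌊a⌋₊ : ℝ) ≤ a := Nat.floor_le ha0
    have h4 : (⌊b⌋₊ : ℝ) ≤ b := Nat.floor_le hb0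
    have hab : |a - b| < 1 := by
      rw [abs_lt]
      have hfl : (⌊a⌋₊ : ℝ) = (⌊b⌋₊ : ℝ) := by exact_mod_cast hkey.symm
      constructor <;> nlinarith
    have hd : Int.fract (↑n₂ * θ) - Int.fract (↑n₁ * θ) = (a - b) / L := by
      rw [ha, hb]; field_simp
    rw [hd, abs_div, abs_of_pos hLpos]
    exact div_lt_div_of_pos_right hab hLpos
  refine ⟨⌊(n₂ : ℝ) * θ⌋ - ⌊(n₁ : ℝ) * θ⌋, ?_⟩
  have hsub : ((n₂ - n₁ : ℕ) : ℝ) * θ = (n₂ : ℝ) * θ - (n₁ : ℝ) * θ := by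
    rw [Nat.cast_sub hlt.le]; ring
  rw [hsub]
  have he : (n₂:ℝ)*θ - (n₁:ℝ)*θ - ((⌊(n₂:ℝ)*θ⌋ - ⌊(n₁:ℝ)*θ⌋ : ℤ) : ℝ) =
      Int.fract ((n₂:ℝ)*θ) - Int.fract ((n₁:ℝ)*θ) := by
    unfold Int.fract; push_cast; ring
  rw [he]
  exact hfr

theorem good_n (s : Finset ℝ) (B : ℕ) :
    ∃ n : ℕ, B < n ∧ ∀ θ ∈ s, 1 / 2 ≤ Real.cos (n * θ) := by
  classical
  set k := B + 1 with hk
  set L := 7 * k with hL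
  obtain ⟨q, hq1, hq⟩ := simul_approx (s.image (fun θ => θ / (2 * π))) L (by omega)
  refine ⟨k * q, by nlinarith, fun θ hθ => ?_⟩
  obtain ⟨m, hm⟩ := hq (θ / (2 * π)) (Finset.mem_image_of_mem _ hθ)
  have hπ : (0:ℝ) < π := pi_pos
  set x : ℝ := 2 * π * ((k:ℝ) * ((q:ℝ) * (θ / (2*π)) - m)) with hx
  have hθeq : ((k * q : ℕ) : ℝ) * θ = x + ((k : ℤ) * m : ℤ) * (2 * π) := by
    rw [hx]
    push_cast
    field_simp
    ring
  rw [hθeq, Real.cos_add_int_mul_two_pi]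
  have hxb : |x| ≤ π / 3 := by
    have habs : |x| = (2 * π * (k:ℝ)) * |(q:ℝ) * (θ / (2*π)) - m| := by
      rw [hx, show 2 * π * ((k:ℝ) * ((q:ℝ) * (θ / (2*π)) - m)) =
        (2 * π * (k:ℝ)) * ((q:ℝ) * (θ / (2*π)) - m) from by ring, abs_mul,
        abs_of_nonneg (by positivity : (0:ℝ) ≤ 2 * π * (k:ℝ))]
    rw [habs]
    calc (2 * π * (k:ℝ)) * |(q:ℝ) * (θ / (2*π)) - m| ≤ (2 * π * (k:ℝ)) * (1/L) :=
          mul_le_mul_of_nonneg_left hm.le (by positivity)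
      _ ≤ π / 3 := by
          rw [hL]
          have hk0 : (0:ℝ) < k := by positivity
          have h7 : (0:ℝ) < ((7*k:ℕ):ℝ) := by positivity
          rw [mul_one_div, div_le_div_iff₀ h7 (by norm_num : (0:ℝ) < 3)]
          push_cast
          nlinarith
  calc (1:ℝ)/2 = Real.cos (π/3) := by rw [Real.cos_pi_div_three]
    _ ≤ Real.cos |x| := Real.cos_le_cos_of_nonneg_of_le_pi (abs_nonneg x)
        (by linarith) (by linarith [abs_nonneg x, hxb])
    _ = Real.cos x := Real.cos_abs x

end Approx

theorem re_pow (w : ℂ) (n : ℕ) :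
    (w ^ n).re = ‖w‖ ^ n * Real.cos (n * Complex.arg w) := by
  conv_lhs => rw [← Complex.norm_mul_exp_arg_mul_I w]
  rw [mul_pow, ← Complex.exp_nat_mul,
    show (n:ℂ) * (Complex.arg w * Complex.I) = ((n * Complex.arg w : ℝ) : ℂ) * Complex.I from by
      push_cast; ring,
    ← Complex.ofReal_pow, Complex.re_ofReal_mul, Complex.exp_ofReal_mul_I_re]

/-- Complex separation theorem: if `X` is a complex Banach space, `G` a
compact group acting separately continuously by invertible continuous linear operators,
`K` a `G`-invariant set, and `Q` a continuous polynomial separating `z ∉ K` from `K` with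
`|Q(z)| > 1` and such that for some `η ∈ (0,1)` the set of arguments
`{Arg Q(ρ(γ)z) : γ ∈ G, |Q(ρ(γ)z)| ≥ η}` is finite, then there is a `G`-invariant continuous
polynomial `P` separating `z` from `K`; if `Q` is homogeneous, `P` can be chosen homogeneous. -/
theorem statement4 {X : Type*} [NormedAddCommGroup X] [NormedSpace ℂ X] [CompleteSpace X]
    {G : Type*} [Group G] [TopologicalSpace G] [IsTopologicalGroup G] [CompactSpace G]
    (ρ : G →* (X ≃L[ℂ] X)) (hρ : ∀ x : X, Continuous fun g : G => (ρ g) x)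
    (K : Set X) (hK : ∀ (g : G), ∀ x ∈ K, (ρ g) x ∈ K)
    (z : X) (hz : z ∉ K)
    (Q : X → ℂ) (hQ : IsContinuousPolynomial ℂ Q)
    (hsep : ∃ c, c < ‖Q z‖ ∧ ∀ w ∈ K, ‖Q w‖ ≤ c)
    (hQz : 1 < ‖Q z‖)
    (η : ℝ) (hη₀ : 0 < η) (hη₁ : η < 1)
    (hfin : {θ : ℝ | ∃ γ : G, η ≤ ‖Q ((ρ γ) z)‖ ∧ θ = Complex.arg (Q ((ρ γ) z))}.Finite) :
    (∃ P : X → ℂ, IsContinuousPolynomial ℂ P ∧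
      (∀ (g : G) (x : X), P ((ρ g) x) = P x) ∧
      ∃ c, c < ‖P z‖ ∧ ∀ w ∈ K, ‖P w‖ ≤ c) ∧
    ∀ m : ℕ, IsHomogeneousPolynomial ℂ m Q →
      ∃ (m' : ℕ) (P : X → ℂ), IsHomogeneousPolynomial ℂ m' P ∧
        (∀ (g : G) (x : X), P ((ρ g) x) = P x) ∧
        ∃ c, c < ‖P z‖ ∧ ∀ w ∈ K, ‖P w‖ ≤ c := by
  classical
  obtain ⟨c, hc, hcK⟩ := hsep
  rcases K.eq_empty_or_nonempty with rfl | ⟨w₀, hw₀⟩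
  · constructor
    · exact ⟨fun _ => 1, ⟨0, 1, fun k => k.elim0, fun x => by simp⟩,
        fun _ _ => rfl, 0, by norm_num, fun w hw => hw.elim⟩
    · intro m _
      exact ⟨0, fun _ => 1, IsHomog.const 1, fun _ _ => rfl, 0, by norm_num,
        fun w hw => hw.elim⟩
  have hc0 : 0 ≤ c := le_trans (norm_nonneg _) (hcK w₀ hw₀)
  borelize G
  set μ : Measure G :=
    MeasureTheory.Measure.haarMeasure (⊤ : TopologicalSpace.PositiveCompacts G) with hμ
  haveI : IsProbabilityMeasure μ := ⟨by
    rw [hμ, ← TopologicalSpace.PositiveCompacts.coe_top (α := G)]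
    exact Measure.haarMeasure_self⟩
  obtain ⟨M, hM0, hM⟩ := op_bound ρ hρ
  have hQsh : SumHomog Q := sumHomog_of_poly hQ
  have hQcont : Continuous Q := sumHomog_continuous hQsh
  -- the function γ ↦ Q (ρ(γ⁻¹) z)
  set f : G → ℂ := fun γ => Q ((ρ γ⁻¹) z) with hf
  have hfcont : Continuous f := hQcont.comp ((hρ z).comp continuous_inv)
  have hf1 : f 1 = Q z := by
    rw [hf]
    simp only [inv_one, map_one]
    rfl
  set S : Finset ℝ := hfin.toFinset with hS
  have hargS : ∀ γ : G, η ≤ ‖f γ‖ → Complex.arg (f γ) ∈ S := by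
    intro γ h
    exact hfin.mem_toFinset.mpr ⟨γ⁻¹, h, rfl⟩
  -- the threshold t
  set t : ℝ := (max c 1 + ‖Q z‖) / 2 with ht
  have hmax : max c 1 < ‖Q z‖ := max_lt hc hQz
  have ht1 : 1 < t := by
    have := le_max_right c 1
    rw [ht]; linarith
  have htc : c < t := by
    have := le_max_left c 1
    rw [ht]; linarith
  have htQ : t < ‖Q z‖ := by rw [ht]; linarith
  have ht0 : 0 < t := by linarith
  have htη : η < t := by linarith
  -- the open set U and its measure
  set U : Set G := {γ | t < ‖f γ‖} with hU
  have hUopen : IsOpen U := isOpen_lt continuous_const hfcont.norm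
  have h1U : (1:G) ∈ U := by
    show t < ‖f 1‖
    rw [hf1]; exact htQ
  set d : ℝ := (μ U).toReal with hdd
  have hd : 0 < d := ENNReal.toReal_pos (hUopen.measure_pos μ ⟨1, h1U⟩).ne'
    (measure_ne_top μ U)
  -- choose the exponent n
  have htend : Filter.Tendsto (fun n : ℕ => (c/t)^n + (η/t)^n) Filter.atTop (nhds 0) := by
    have h1 : Filter.Tendsto (fun n : ℕ => (c/t)^n) Filter.atTop (nhds 0) :=
      tendsto_pow_atTop_nhds_zero_of_lt_one (by positivity)
        (by rw [div_lt_one ht0]; exact htc)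
    have h2 : Filter.Tendsto (fun n : ℕ => (η/t)^n) Filter.atTop (nhds 0) :=
      tendsto_pow_atTop_nhds_zero_of_lt_one (by positivity)
        (by rw [div_lt_one ht0]; exact htη)
    simpa using h1.add h2
  obtain ⟨B, hB⟩ := Filter.eventually_atTop.mp
    (htend.eventually_lt_const (by positivity : (0:ℝ) < d/2))
  obtain ⟨n, hnB, hcos⟩ := good_n S B
  have hkey : c ^ n + η ^ n < d / 2 * t ^ n := by
    have hn := hB n hnB.le
    have h1 : (c/t)^n = c^n / t^n := div_pow c t n
    have h2 : (η/t)^n = η^n / t^n := div_pow η t n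
    rw [h1, h2, ← add_div, div_lt_iff₀ (pow_pos ht0 n)] at hn
    linarith
  -- the averaged polynomial
  set P : X → ℂ := fun x => ∫ γ, (Q ((ρ γ⁻¹) x)) ^ n ∂μ with hP
  -- invariance
  have hPinv : ∀ (g : G) (x : X), P ((ρ g) x) = P x := by
    intro g x
    have hcomp : ∀ γ : G, (ρ γ⁻¹) ((ρ g) x) = (ρ (g⁻¹ * γ)⁻¹) x := by
      intro γ
      rw [mul_inv_rev, inv_inv, map_mul]
      rfl
    show (∫ γ, (Q ((ρ γ⁻¹) ((ρ g) x))) ^ n ∂μ) = ∫ γ, (Q ((ρ γ⁻¹) x)) ^ n ∂μ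
    rw [integral_congr_ae (ae_of_all μ fun γ => by rw [hcomp γ])]
    exact integral_mul_left_eq_self (fun γ => (Q ((ρ γ⁻¹) x)) ^ n) g⁻¹
  -- upper bound on K
  have hPK : ∀ w ∈ K, ‖P w‖ ≤ c ^ n := by
    intro w hw
    have hwc : Continuous fun γ : G => (Q ((ρ γ⁻¹) w)) ^ n :=
      (hQcont.comp ((hρ w).comp continuous_inv)).pow n
    calc ‖P w‖ ≤ ∫ γ, ‖(Q ((ρ γ⁻¹) w)) ^ n‖ ∂μ := norm_integral_le_integral_norm _
      _ ≤ ∫ _γ, c ^ n ∂μ := by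
          refine integral_mono (cont_integrable hwc.norm) (integrable_const _) ?_
          intro γ
          show ‖Q ((ρ γ⁻¹) w) ^ n‖ ≤ c ^ n
          rw [norm_pow]
          exact pow_le_pow_left₀ (norm_nonneg _) (hcK _ (hK γ⁻¹ w hw)) n
      _ = c ^ n := by simp
  -- lower bound at z
  have hintf : Integrable (fun γ => f γ ^ n) μ := cont_integrable (hfcont.pow n)
  have hPz : c ^ n < ‖P z‖ := by
    have hre : (P z).re = ∫ γ, (f γ ^ n).re ∂μ := by
      rw [hP]
      exact (Complex.reCLM.integral_comp_comm hintf).symm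
    -- pointwise lower bound
    have hlo : ∀ γ : G, U.indicator (fun _ => t ^ n / 2) γ - η ^ n ≤ (f γ ^ n).re := by
      intro γ
      rw [re_pow]
      by_cases hγU : γ ∈ U
      · rw [Set.indicator_of_mem hγU]
        have hfγ : t < ‖f γ‖ := hγU
        have hcosγ : 1/2 ≤ Real.cos (n * Complex.arg (f γ)) :=
          hcos _ (hargS γ (by linarith))
        have h1 : t ^ n * (1/2) ≤ ‖f γ‖ ^ n * Real.cos (n * Complex.arg (f γ)) := by
          refine mul_le_mul ?_ hcosγ (by norm_num) (by positivity)
          exact pow_le_pow_left₀ ht0.le (by linarith) n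
        have hηn : 0 < η ^ n := pow_pos hη₀ n
        nlinarith
      · rw [Set.indicator_of_notMem hγU]
        by_cases hγη : η ≤ ‖f γ‖
        · have hcosγ : 1/2 ≤ Real.cos (n * Complex.arg (f γ)) := hcos _ (hargS γ hγη)
          have : 0 ≤ ‖f γ‖ ^ n * Real.cos (n * Complex.arg (f γ)) := by
            apply mul_nonneg (by positivity)
            linarith
          have hηn : 0 < η ^ n := pow_pos hη₀ n
          linarith
        · push_neg at hγη
          have h1 : ‖f γ‖ ^ n ≤ η ^ n := by
            refine pow_le_pow_left₀ (by positivity) ?_ n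
            linarith
          have h2 : -(‖f γ‖ ^ n) ≤
              ‖f γ‖ ^ n * Real.cos (n * Complex.arg (f γ)) := by
            nlinarith [Real.neg_one_le_cos (n * Complex.arg (f γ)),
              Real.cos_le_one (n * Complex.arg (f γ)),
              pow_nonneg (norm_nonneg (f γ)) n]
          linarith
    have hloint : Integrable (fun γ => U.indicator (fun _ => t ^ n / 2) γ - η ^ n) μ := by
      exact ((integrable_const _).indicator hUopen.measurableSet).sub (integrable_const _)
    have hint2 : Integrable (fun γ => (f γ ^ n).re) μ := cont_integrable (Complex.continuous_re.comp (hfcont.pow n))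
    have hI : d * (t ^ n / 2) - η ^ n ≤ ∫ γ, (f γ ^ n).re ∂μ := by
      have := integral_mono hloint hint2 hlo
      rwa [integral_sub ((integrable_const _).indicator hUopen.measurableSet)
        (integrable_const _), integral_indicator_const _ hUopen.measurableSet,
        integral_const, probReal_univ, one_smul, smul_eq_mul] at this
    calc c ^ n < d * (t ^ n / 2) - η ^ n := by nlinarith
      _ ≤ (P z).re := by rw [hre]; exact hI
      _ ≤ ‖P z‖ := by exact Complex.re_le_norm _
  constructor
  · refine ⟨P, ?_, hPinv, c ^ n, hPz, hPK⟩
    exact poly_of_sumHomog (avg_sumHomog μ ρ hρ hM0 hM (hQsh.pow n))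
  · intro m hQm
    refine ⟨m * n, P, ?_, hPinv, c ^ n, hPz, hPK⟩
    exact avg_homog μ ρ hρ hM0 hM (IsHomog.pow hQm n)
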